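/- arXiv:0909.5604 — 3 statements merged into one kernel-verified Lean document; each statement's English description precedes it below -/
import Mathlib

section
/- Let D ⊂ ℂⁿ be a bounded domain, let H₂, H₃ : ℂⁿ → ℂ be homogeneous holomorphic polynomials of degrees 2 and 3 respectively, define Ψ(z) := z_n + 2H₂(z) + 2H₃(z), and suppose there are ρ > 0 and C₃ > 0 with D ∩ B(0,ρ) ⊆ {z : Re Ψ(z) < C₃‖z‖⁴} and (0,…,0,−δ) ∈ D for all sufficiently small δ > 0. Then there exist constants C₅, C₆ > 0 and δ₀ > 0 such that for every 0 < δ < δ₀, every 0 < s < 1, and every holomorphic map φ : 𝔻 → D with φ(0) = (0,…,0,−δ): (a) Re Ψ(φ(sλ)) < C₅(δ + s)⁴ for all λ ∈ 𝔻, and (b) s·|(Ψ∘φ)'(0)| ≤ C₆·(δ + (δ + s)⁴). -/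
noncomputable section

set_option maxHeartbeats 1000000

open Complex Metric Set Filter

abbrev Cn (n : ℕ) := EuclideanSpace ℂ (Fin n)

/-- Wirtinger derivative `∂f/∂z_j` at `p` (computed via the real Fréchet derivative). -/
def wderiv {n : ℕ} (j : Fin n) (f : Cn n → ℂ) (p : Cn n) : ℂ :=
  (fderiv ℝ f p (EuclideanSpace.single j 1) -
    Complex.I * fderiv ℝ f p (EuclideanSpace.single j Complex.I)) / 2

/-- Conjugate Wirtinger derivative `∂f/∂z̄_j` at `p`. -/
def wderivBar {n : ℕ} (j : Fin n) (f : Cn n → ℂ) (p : Cn n) : ℂ :=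
  (fderiv ℝ f p (EuclideanSpace.single j 1) +
    Complex.I * fderiv ℝ f p (EuclideanSpace.single j Complex.I)) / 2

/-- Levi form of a complex-valued function: `∑_{j,l} ∂²f/∂z_j∂z̄_l (p) X_j conj(X_l)`. -/
def leviFormC {n : ℕ} (f : Cn n → ℂ) (p X : Cn n) : ℂ :=
  ∑ j, ∑ l, wderiv j (fun z => wderivBar l f z) p * X j * (starRingEnd ℂ) (X l)

/-- Levi form of a real-valued function. -/
def leviForm {n : ℕ} (r : Cn n → ℝ) (p X : Cn n) : ℂ :=
  leviFormC (fun z => (r z : ℂ)) p X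

/-- The pairing `⟨∂r(z), X⟩ = ∑_j ∂r/∂z_j (z) X_j`. -/
def delPair {n : ℕ} (r : Cn n → ℝ) (z X : Cn n) : ℂ :=
  ∑ j, wderiv j (fun w => (r w : ℂ)) z * X j

/-- The Kobayashi–Royden metric of `D` at `z` in direction `X`. -/
def kobayashi {n : ℕ} (D : Set (Cn n)) (z X : Cn n) : ℝ :=
  sInf {α : ℝ | 0 < α ∧ ∃ f : ℂ → Cn n, DifferentiableOn ℂ f (ball (0:ℂ) 1) ∧
    MapsTo f (ball (0:ℂ) 1) D ∧ f 0 = z ∧ α • fderiv ℂ f 0 1 = X}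

/-- `ν` is the unit outward normal vector to `∂D = {r = 0}` at `P`:  it is a unit vector
positively proportional to the (real) gradient of the defining function `r` at `P`. -/
def IsUnitOutwardNormalAt {n : ℕ} (r : Cn n → ℝ) (P ν : Cn n) : Prop :=
  ‖ν‖ = 1 ∧ ∃ c : ℝ, 0 < c ∧ ∀ v : Cn n, fderiv ℝ r P v = c * (inner ℂ v ν : ℂ).re

/-- The Levi form of `r` is positive semidefinite on the complex tangent space at every
boundary point of `D`. -/
def LeviPSDOnTangent {n : ℕ} (r : Cn n → ℝ) (D : Set (Cn n)) : Prop :=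
  ∀ p ∈ frontier D, ∀ X : Cn n, delPair r p X = 0 → 0 ≤ (leviForm r p X).re

lemma bc_deriv {g : ℂ → ℂ} {B : ℝ} (hg : DifferentiableOn ℂ g (ball 0 1)) (hB : 0 < B)
    (hre : ∀ lam ∈ ball (0:ℂ) 1, (g lam).re - (g 0).re < B) :
    ‖deriv g 0‖ ≤ 2 * B := by
  set w : ℂ → ℂ := fun lam => g lam - g 0 with hw
  have hwdiff : DifferentiableOn ℂ w (ball 0 1) := hg.sub_const _
  have hne : ∀ lam ∈ ball (0:ℂ) 1, ((2*B : ℂ) - w lam) ≠ 0 := by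
    intro lam hlam
    have h1 : ((2*B : ℂ) - w lam).re = 2*B - ((g lam).re - (g 0).re) := by
      simp [hw, Complex.sub_re]
    have hpos : 0 < ((2*B : ℂ) - w lam).re := by
      rw [h1]; have := hre lam hlam; linarith
    intro h
    rw [h] at hpos
    simp at hpos
  set F : ℂ → ℂ := fun lam => w lam * ((2*B : ℂ) - w lam)⁻¹ with hF
  have hFdiff : DifferentiableOn ℂ F (ball 0 1) :=
    hwdiff.mul (((differentiableOn_const _).sub hwdiff).inv hne)
  have hF0 : F 0 = 0 := by simp [hF, hw]
  have hmaps : MapsTo F (ball (0:ℂ) 1) (ball (F 0) 1) := by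
    intro lam hlam
    rw [hF0, mem_ball_zero_iff]
    have hd := hne lam hlam
    have habs : ‖w lam‖ < ‖(2*B : ℂ) - w lam‖ := by
      have h1 : Complex.normSq (w lam) < Complex.normSq ((2*B : ℂ) - w lam) := by
        have hrew := hre lam hlam
        have hh : (w lam).re = (g lam).re - (g 0).re := by simp [hw, Complex.sub_re]
        have h2 : ((2*(B:ℂ))).re = 2*B := by simp
        have h3 : ((2*(B:ℂ))).im = 0 := by simp
        simp only [Complex.normSq_apply, Complex.sub_re, Complex.sub_im, hh, h2, h3]
        nlinarith
      have e1 := Complex.sq_norm (w lam)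
      have e2 := Complex.sq_norm ((2*B:ℂ) - w lam)
      nlinarith [norm_nonneg (w lam), norm_nonneg ((2*B:ℂ) - w lam)]
    have hpos : 0 < ‖(2*B:ℂ) - w lam‖ := norm_pos_iff.2 hd
    rw [show F lam = w lam * ((2*B:ℂ) - w lam)⁻¹ from rfl, norm_mul, norm_inv,
      mul_inv_lt_iff₀ hpos, one_mul]
    exact habs
  have hschwarz : ‖deriv F 0‖ ≤ 1 := by
    have := Complex.norm_deriv_le_div_of_mapsTo_ball hFdiff (hmaps.mono_right ball_subset_closedBall) one_pos
    simpa using this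
  have hgat : DifferentiableAt ℂ g 0 :=
    hg.differentiableAt (isOpen_ball.mem_nhds (by simp))
  have hwat : HasDerivAt w (deriv g 0) 0 := (hgat.hasDerivAt).sub_const _
  have hw0 : w 0 = 0 := by simp [hw]
  have hBne : ((2*B : ℂ) - w 0) ≠ 0 := by
    rw [hw0, sub_zero]
    exact_mod_cast mul_ne_zero two_ne_zero (Complex.ofReal_ne_zero.2 hB.ne')
  have hden : HasDerivAt (fun lam => (2*B:ℂ) - w lam) (-(deriv g 0)) 0 :=
    hwat.const_sub _
  have hinv := hden.inv hBne
  have hFat := hwat.mul hinv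
  have hderivF : deriv F 0 = deriv g 0 * ((2*B:ℂ))⁻¹ := by
    rw [show deriv F 0 = _ from hFat.deriv]
    rw [hw0]
    simp [hw0]
  rw [hderivF] at hschwarz
  rw [norm_mul, norm_inv] at hschwarz
  have h2B : ‖((2*B:ℂ))‖ = 2*B := by
    rw [show ((2*B:ℂ)) = ((2*B : ℝ) : ℂ) by push_cast; ring, Complex.norm_real, Real.norm_eq_abs]
    exact abs_of_pos (by positivity)
  rw [h2B] at hschwarz
  rw [mul_inv_le_iff₀ (by positivity)] at hschwarz
  linarith

/-- Let `D ⊂ ℂ^{n+1}` be a bounded domain, `H₂, H₃` homogeneous holomorphic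
polynomials of degrees `2` and `3`, `Ψ(z) = z_{last} + 2H₂(z) + 2H₃(z)`, and suppose
`D ∩ B(0,ρ) ⊆ {Re Ψ < C₃‖z‖⁴}` and `(0,…,0,-δ) ∈ D` for all small `δ > 0`.  Then there are
`C₅, C₆ > 0` and `δ₀ > 0` such that for all `0 < δ < δ₀`, `0 < s < 1`, and every holomorphic
`φ : 𝔻 → D` with `φ(0) = (0,…,0,-δ)`:  (a) `Re Ψ(φ(sλ)) < C₅(δ+s)⁴` on `𝔻`, and
(b) `s·|(Ψ∘φ)'(0)| ≤ C₆·(δ + (δ+s)⁴)`. -/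
theorem statement11 {n : ℕ} (D : Set (Cn (n + 1)))
    (hDopen : IsOpen D) (hDconn : IsConnected D) (hDbdd : Bornology.IsBounded D)
    (H2 H3 : Cn (n + 1) → ℂ)
    (hH2hol : Differentiable ℂ H2) (hH3hol : Differentiable ℂ H3)
    (hH2hom : ∀ (t : ℂ) (z : Cn (n + 1)), H2 (t • z) = t ^ 2 * H2 z)
    (hH3hom : ∀ (t : ℂ) (z : Cn (n + 1)), H3 (t • z) = t ^ 3 * H3 z)
    (Ψ : Cn (n + 1) → ℂ)
    (hΨ : Ψ = fun z => z (Fin.last n) + 2 * H2 z + 2 * H3 z)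
    (ρ C₃ : ℝ) (hρ : 0 < ρ) (hC₃ : 0 < C₃)
    (hincl : D ∩ Metric.ball (0 : Cn (n + 1)) ρ ⊆ {z | (Ψ z).re < C₃ * ‖z‖ ^ 4})
    (δ₁ : ℝ) (hδ₁ : 0 < δ₁)
    (hpts : ∀ δ : ℝ, 0 < δ → δ < δ₁ →
      (EuclideanSpace.single (Fin.last n) (-δ : ℂ) : Cn (n + 1)) ∈ D) :
    ∃ C₅ : ℝ, 0 < C₅ ∧ ∃ C₆ : ℝ, 0 < C₆ ∧ ∃ δ₀ : ℝ, 0 < δ₀ ∧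
      ∀ δ : ℝ, 0 < δ → δ < δ₀ → ∀ s : ℝ, 0 < s → s < 1 →
        ∀ φ : ℂ → Cn (n + 1), DifferentiableOn ℂ φ (Metric.ball (0:ℂ) 1) →
          MapsTo φ (Metric.ball (0:ℂ) 1) D →
          φ 0 = EuclideanSpace.single (Fin.last n) (-δ : ℂ) →
          (∀ lam ∈ Metric.ball (0:ℂ) 1, (Ψ (φ ((s : ℂ) * lam))).re < C₅ * (δ + s) ^ 4) ∧
          s * ‖deriv (fun lam => Ψ (φ lam)) 0‖ ≤
            C₆ * (δ + (δ + s) ^ 4) := by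
  
  classical
  obtain ⟨r, hr⟩ := hDbdd.subset_closedBall 0
  set R : ℝ := max r (max ρ 1) + 1 with hRdef
  have hR1 : 1 < R := by
    have : (1:ℝ) ≤ max r (max ρ 1) := le_trans (le_max_right ρ 1) (le_max_right r _)
    linarith
  have hRρ : ρ < R := by
    have : ρ ≤ max r (max ρ 1) := le_trans (le_max_left ρ 1) (le_max_right r _)
    linarith
  have hR0 : 0 < R := by linarith
  have hDR : D ⊆ ball 0 R := by
    intro y hy
    have := hr hy
    rw [mem_closedBall_zero_iff] at this
    rw [mem_ball_zero_iff]
    have : r ≤ max r (max ρ 1) := le_max_left _ _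
    have := hr hy; rw [mem_closedBall_zero_iff] at this
    calc ‖y‖ ≤ r := this
      _ < R := by have : r ≤ max r (max ρ 1) := le_max_left _ _; linarith
  have hΨdiff : Differentiable ℂ Ψ := by
    rw [hΨ]
    have hproj : Differentiable ℂ (fun z : Cn (n+1) => z (Fin.last n)) :=
      (EuclideanSpace.proj (𝕜 := ℂ) (Fin.last n)).differentiable
    exact (hproj.add (hH2hol.const_mul 2)).add (hH3hol.const_mul 2)
  obtain ⟨M0, hM0⟩ := (isCompact_closedBall (0 : Cn (n+1)) R).exists_bound_of_continuousOn
    hΨdiff.continuous.continuousOn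
  set M : ℝ := max M0 0 with hMdef
  have hM : 0 ≤ M := le_max_right _ _
  set e : Cn (n+1) := EuclideanSpace.single (Fin.last n) (1:ℂ) with he
  set K : ℝ := 1 + 2*‖H2 e‖ + 2*‖H3 e‖ with hKdef
  have hK : 0 < K := by positivity
  set C₅ : ℝ := max (C₃ * (2*R)^4) ((M+1) * (2*R/ρ)^4) with hC₅def
  have hC₅ : 0 < C₅ := lt_of_lt_of_le (by positivity) (le_max_left _ _)
  set C₆ : ℝ := 2*C₅ + 2*K with hC₆def
  have hC₆ : 0 < C₆ := by positivity
  refine ⟨C₅, hC₅, C₆, hC₆, min 1 ρ, lt_min one_pos hρ, ?_⟩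
  intro δ hδ hδlt s hs hs1 φ hφdiff hφmaps hφ0
  have hδ1 : δ < 1 := lt_of_lt_of_le hδlt (min_le_left _ _)
  have hδρ : δ < ρ := lt_of_lt_of_le hδlt (min_le_right _ _)
  have hφ0norm : ‖φ 0‖ = δ := by
    rw [hφ0, EuclideanSpace.norm_single]
    simp [abs_of_pos hδ]
  have hmaps2R : MapsTo φ (ball 0 1) (ball (φ 0) (2*R)) := by
    intro y hy
    have h2 : ‖φ y‖ < R := mem_ball_zero_iff.1 (hDR (hφmaps hy))
    have h3 : ‖φ 0‖ < R := by rw [hφ0norm]; linarith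
    rw [mem_ball, dist_eq_norm]
    calc ‖φ y - φ 0‖ ≤ ‖φ y‖ + ‖φ 0‖ := norm_sub_le _ _
      _ < 2*R := by linarith
  have hmem : ∀ lam ∈ ball (0:ℂ) 1, (s:ℂ)*lam ∈ ball (0:ℂ) 1 := by
    intro lam hlam
    rw [mem_ball_zero_iff] at *
    rw [norm_mul, Complex.norm_real]
    have : ‖lam‖ < 1 := hlam
    have hns : ‖s‖ = s := abs_of_pos hs
    rw [Real.norm_eq_abs, abs_of_pos hs]
    nlinarith
  have hnormbound : ∀ lam ∈ ball (0:ℂ) 1, ‖φ ((s:ℂ)*lam)‖ ≤ δ + 2*R*s := by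
    intro lam hlam
    have hdist := Complex.dist_le_div_mul_dist_of_mapsTo_ball hφdiff (hmaps2R.mono_right ball_subset_closedBall) (hmem lam hlam)
    rw [dist_eq_norm, dist_zero_right] at hdist
    have hnsl : ‖(s:ℂ)*lam‖ ≤ s := by
      rw [norm_mul, Complex.norm_real, Real.norm_eq_abs, abs_of_pos hs]
      have : ‖lam‖ < 1 := mem_ball_zero_iff.1 hlam
      nlinarith
    have h5 : ‖φ ((s:ℂ)*lam) - φ 0‖ ≤ 2*R*s := by
      calc ‖φ ((s:ℂ)*lam) - φ 0‖ ≤ 2*R/1 * ‖(s:ℂ)*lam‖ := hdist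
        _ ≤ 2*R*s := by rw [div_one]; nlinarith
    calc ‖φ ((s:ℂ)*lam)‖ = ‖(φ ((s:ℂ)*lam) - φ 0) + φ 0‖ := by rw [sub_add_cancel]
      _ ≤ ‖φ ((s:ℂ)*lam) - φ 0‖ + ‖φ 0‖ := norm_add_le _ _
      _ ≤ 2*R*s + δ := by rw [hφ0norm]; linarith
      _ = δ + 2*R*s := by ring
  have hδs : 0 < δ + s := by linarith
  have parta : ∀ lam ∈ ball (0:ℂ) 1, (Ψ (φ ((s:ℂ)*lam))).re < C₅ * (δ + s)^4 := by
    intro lam hlam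
    set x := φ ((s:ℂ)*lam) with hx
    have hxD : x ∈ D := hφmaps (hmem lam hlam)
    have hxn : ‖x‖ ≤ δ + 2*R*s := hnormbound lam hlam
    have hcomb : δ + 2*R*s ≤ 2*R*(δ+s) := by nlinarith
    by_cases hcase : δ + 2*R*s < ρ
    · have hxρ : x ∈ ball (0 : Cn (n+1)) ρ := mem_ball_zero_iff.2 (lt_of_le_of_lt hxn hcase)
      have hlt := hincl ⟨hxD, hxρ⟩
      have h1 : ‖x‖ ≤ 2*R*(δ+s) := le_trans hxn hcomb
      have h2 : ‖x‖^4 ≤ (2*R*(δ+s))^4 := pow_le_pow_left₀ (norm_nonneg x) h1 4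
      have h2' : (2*R*(δ+s))^4 = (2*R)^4*(δ+s)^4 := by ring
      have h3 : C₃ * ‖x‖^4 ≤ C₃ * (2*R)^4 * (δ+s)^4 := by
        calc C₃ * ‖x‖^4 ≤ C₃ * ((2*R)^4*(δ+s)^4) :=
              mul_le_mul_of_nonneg_left (h2.trans_eq h2') hC₃.le
          _ = C₃ * (2*R)^4 * (δ+s)^4 := by ring
      have h4 : C₃ * (2*R)^4 ≤ C₅ := le_max_left _ _
      have h5 : C₃ * (2*R)^4 * (δ+s)^4 ≤ C₅ * (δ+s)^4 :=
        mul_le_mul_of_nonneg_right h4 (pow_nonneg hδs.le 4)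
      exact lt_of_lt_of_le hlt (le_trans h3 h5)
    · push_neg at hcase
      have hxM : (Ψ x).re ≤ M := by
        have hxball : x ∈ closedBall (0 : Cn (n+1)) R := ball_subset_closedBall (hDR hxD)
        have h1 := hM0 x hxball
        have h2 : (Ψ x).re ≤ ‖Ψ x‖ := Complex.re_le_norm _
        have : M0 ≤ M := le_max_left _ _
        linarith
      have h6 : ρ ≤ 2*R*(δ+s) := le_trans hcase hcomb
      have h7 : 1 ≤ (2*R/ρ)*(δ+s) := by
        rw [div_mul_eq_mul_div, le_div_iff₀ hρ]; linarith
      have h8 : 1 ≤ ((2*R/ρ)*(δ+s))^4 := one_le_pow₀ h7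
      have h9 : (M+1) * ((2*R/ρ)*(δ+s))^4 ≤ C₅ * (δ+s)^4 := by
        rw [mul_pow]
        have h10 : (M+1) * (2*R/ρ)^4 ≤ C₅ := le_max_right _ _
        nlinarith [pow_nonneg hδs.le 4, pow_nonneg (by positivity : (0:ℝ) ≤ 2*R/ρ) 4]
      nlinarith
  -- part (b)
  refine ⟨parta, ?_⟩
  set g : ℂ → ℂ := fun lam => Ψ (φ ((s:ℂ)*lam)) with hgdef
  have hg0 : g 0 = Ψ (φ 0) := by simp [hgdef]
  have hsmaps : MapsTo (fun lam : ℂ => (s:ℂ)*lam) (ball 0 1) (ball 0 1) := hmem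
  have hgdiff : DifferentiableOn ℂ g (ball 0 1) := by
    have h1 : DifferentiableOn ℂ (fun lam : ℂ => (s:ℂ)*lam) (ball 0 1) :=
      (differentiable_id.const_mul _).differentiableOn
    exact hΨdiff.comp_differentiableOn (hφdiff.comp h1 hsmaps)
  set B : ℝ := C₅*(δ+s)^4 - (Ψ (φ 0)).re with hBdef
  have hB : 0 < B := by
    have h0 := parta 0 (by simp)
    simp only [mul_zero] at h0
    simp only [hBdef]
    linarith
  have hbc := bc_deriv hgdiff hB (by
    intro lam hlam
    have := parta lam hlam
    rw [hg0]
    simp only [hgdef, hBdef]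
    linarith)
  -- chain rule
  have hφat : DifferentiableAt ℂ φ 0 :=
    hφdiff.differentiableAt (isOpen_ball.mem_nhds (by simp))
  have hΨφat : DifferentiableAt ℂ (fun lam => Ψ (φ lam)) 0 :=
    (hΨdiff (φ 0)).comp 0 hφat
  have hlin : HasDerivAt (fun lam : ℂ => (s:ℂ)*lam) (s:ℂ) 0 := by
    simpa using (hasDerivAt_id (0:ℂ)).const_mul (s:ℂ)
  have hchain : deriv g 0 = deriv (fun lam => Ψ (φ lam)) 0 * (s:ℂ) := by
    have h1 : g = (fun lam => Ψ (φ lam)) ∘ (fun lam : ℂ => (s:ℂ)*lam) := rfl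
    rw [h1, deriv_comp 0 (by simpa using hΨφat) hlin.differentiableAt, hlin.deriv]
    simp
  -- lower bound on Re Ψ (φ 0)
  have hφ0e : φ 0 = ((-δ : ℂ)) • e := by
    rw [hφ0]
    ext i
    simp [he, EuclideanSpace.single_apply, PiLp.smul_apply, smul_eq_mul, mul_ite]
    split_ifs <;> simp
  have hΨφ0 : Ψ (φ 0) = (-δ : ℂ) + 2*((δ:ℂ)^2 * H2 e) + 2*(-(δ:ℂ)^3 * H3 e) := by
    rw [hφ0e, hΨ]
    simp only [hH2hom, hH3hom]
    have h1 : (((-δ:ℂ)) • e) (Fin.last n) = (-δ:ℂ) := by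
      simp [he, EuclideanSpace.single_apply]
    rw [h1]
    ring_nf
  have hKd : -(K*δ) ≤ (Ψ (φ 0)).re := by
    have hnorm : ‖Ψ (φ 0)‖ ≤ δ + 2*(δ^2*‖H2 e‖) + 2*(δ^3*‖H3 e‖) := by
      rw [hΨφ0]
      calc ‖(-δ : ℂ) + 2*((δ:ℂ)^2 * H2 e) + 2*(-(δ:ℂ)^3 * H3 e)‖
          ≤ ‖(-δ : ℂ) + 2*((δ:ℂ)^2 * H2 e)‖ + ‖2*(-(δ:ℂ)^3 * H3 e)‖ := norm_add_le _ _
        _ ≤ ‖(-δ : ℂ)‖ + ‖2*((δ:ℂ)^2 * H2 e)‖ + ‖2*(-(δ:ℂ)^3 * H3 e)‖ := by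
            have := norm_add_le (-δ : ℂ) (2*((δ:ℂ)^2 * H2 e)); linarith
        _ ≤ δ + 2*(δ^2*‖H2 e‖) + 2*(δ^3*‖H3 e‖) := by
            have e1 : ‖(-δ : ℂ)‖ = δ := by
              rw [norm_neg, Complex.norm_real, Real.norm_eq_abs, abs_of_pos hδ]
            have e2 : ‖2*((δ:ℂ)^2 * H2 e)‖ = 2*(δ^2*‖H2 e‖) := by
              rw [norm_mul, norm_mul, norm_pow, Complex.norm_real, Real.norm_eq_abs,
                abs_of_pos hδ]
              simp
            have e3 : ‖2*(-(δ:ℂ)^3 * H3 e)‖ = 2*(δ^3*‖H3 e‖) := by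
              rw [norm_mul, norm_mul, norm_neg, norm_pow, Complex.norm_real, Real.norm_eq_abs,
                abs_of_pos hδ]
              simp
            rw [e1, e2, e3]
    have h1 : -(Ψ (φ 0)).re ≤ ‖Ψ (φ 0)‖ := by
      have := Complex.abs_re_le_norm (Ψ (φ 0))
      cases abs_le.1 this with
      | intro a b => linarith
    have hd2 : δ^2 ≤ δ := by nlinarith
    have hd3 : δ^3 ≤ δ := by nlinarith
    have h2 : δ + 2*(δ^2*‖H2 e‖) + 2*(δ^3*‖H3 e‖) ≤ K * δ := by
      simp only [hKdef]
      have q1 := mul_le_mul_of_nonneg_left hd2 (norm_nonneg (H2 e))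
      have q2 := mul_le_mul_of_nonneg_left hd3 (norm_nonneg (H3 e))
      nlinarith
    linarith
  -- conclude
  have hfin : s * ‖deriv (fun lam => Ψ (φ lam)) 0‖ = ‖deriv g 0‖ := by
    rw [hchain, norm_mul, Complex.norm_real, Real.norm_eq_abs, abs_of_pos hs]
    ring
  rw [hfin]
  have h2B : 2*B ≤ C₆ * (δ + (δ+s)^4) := by
    simp only [hBdef, hC₆def]
    have p1 : 0 ≤ C₅*δ := by positivity
    have p2 : 0 ≤ K*(δ+s)^4 := by positivity
    linarith [p1, p2, hKd]
  linarith
end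
end

section
/- Define q : ℂ² → ℝ by q(s,t) := e^{|s|² + |t|²}·|s² − t³|². Then the Levi form of q satisfies 𝓛q(s,t)(X) ≥ |s² − t³|²·‖X‖² for all (s,t) ∈ ℂ² and all X ∈ ℂ²; in particular q is plurisubharmonic on ℂ². -/
noncomputable section

open Complex Metric Set Filter

namespace S12

def PR (j : Fin 2) : Cn 2 →L[ℝ] ℂ := (EuclideanSpace.proj j : Cn 2 →L[ℂ] ℂ).restrictScalars ℝ
def QR (j : Fin 2) : Cn 2 →L[ℝ] ℂ := (Complex.conjCLE.toContinuousLinearMap).comp (PR j)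

lemma hasF_coord (j : Fin 2) (z : Cn 2) : HasFDerivAt (fun w : Cn 2 => w j) (PR j) z :=
  (PR j).hasFDerivAt
lemma hasF_conj (j : Fin 2) (z : Cn 2) :
    HasFDerivAt (fun w : Cn 2 => (starRingEnd ℂ) (w j)) (QR j) z := (QR j).hasFDerivAt
lemma PR_apply (j l : Fin 2) (c : ℂ) :
    PR j (EuclideanSpace.single l c) = if j = l then c else 0 := by
  simp [PR, EuclideanSpace.single_apply]
lemma QR_apply (j l : Fin 2) (c : ℂ) :
    QR j (EuclideanSpace.single l c) = if j = l then (starRingEnd ℂ) c else 0 := by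
  simp [QR, PR, EuclideanSpace.single_apply]; split <;> simp

def hC (w : Cn 2) : ℂ := w 0 * w 0 - w 1 * (w 1 * w 1)
def KC (w : Cn 2) : ℂ :=
  (starRingEnd ℂ) (w 0) * (starRingEnd ℂ) (w 0) -
    (starRingEnd ℂ) (w 1) * ((starRingEnd ℂ) (w 1) * (starRingEnd ℂ) (w 1))
def EC (w : Cn 2) : ℂ :=
  Complex.exp (w 0 * (starRingEnd ℂ) (w 0) + w 1 * (starRingEnd ℂ) (w 1))
def qC (w : Cn 2) : ℂ := EC w * (hC w * KC w)
def g0 (w : Cn 2) : ℂ :=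
  EC w * (hC w * (w 0 * KC w + 2 * (starRingEnd ℂ) (w 0)))
def g1 (w : Cn 2) : ℂ :=
  EC w * (hC w * (w 1 * KC w + -(3 * ((starRingEnd ℂ) (w 1) * (starRingEnd ℂ) (w 1)))))
def A0 (z : Cn 2) : ℂ := (starRingEnd ℂ) (z 0) * hC z + 2 * z 0
def A1 (z : Cn 2) : ℂ := (starRingEnd ℂ) (z 1) * hC z + -(3 * (z 1 * z 1))

lemma KC_eq (w : Cn 2) : KC w = (starRingEnd ℂ) (hC w) := by
  simp [KC, hC]

lemma wbar_qC0 : (fun z => wderivBar 0 qC z) = g0 := by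
  funext z
  have h0 := hasF_coord 0 z
  have h1 := hasF_coord 1 z
  have c0 := hasF_conj 0 z
  have c1 := hasF_conj 1 z
  have H : HasFDerivAt qC _ z :=
    (((h0.mul c0).add (h1.mul c1)).cexp).mul
      (((h0.mul h0).sub (h1.mul (h1.mul h1))).mul ((c0.mul c0).sub (c1.mul (c1.mul c1))))
  rw [wderivBar, H.fderiv]
  simp only [ContinuousLinearMap.add_apply, ContinuousLinearMap.sub_apply,
    ContinuousLinearMap.smul_apply, PR_apply, QR_apply, g0, qC, EC, hC, KC, smul_eq_mul,
    if_true, Fin.isValue, Fin.mk_zero, Fin.mk_one]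
  norm_num
  ring_nf
  simp only [Complex.I_sq]
  ring

lemma wbar_qC1 : (fun z => wderivBar 1 qC z) = g1 := by
  funext z
  have h0 := hasF_coord 0 z
  have h1 := hasF_coord 1 z
  have c0 := hasF_conj 0 z
  have c1 := hasF_conj 1 z
  have H : HasFDerivAt qC _ z :=
    (((h0.mul c0).add (h1.mul c1)).cexp).mul
      (((h0.mul h0).sub (h1.mul (h1.mul h1))).mul ((c0.mul c0).sub (c1.mul (c1.mul c1))))
  rw [wderivBar, H.fderiv]
  simp only [ContinuousLinearMap.add_apply, ContinuousLinearMap.sub_apply,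
    ContinuousLinearMap.smul_apply, PR_apply, QR_apply, g1, qC, EC, hC, KC, smul_eq_mul,
    if_true, Fin.isValue, Fin.mk_zero, Fin.mk_one]
  norm_num
  ring_nf
  simp only [Complex.I_sq]
  ring

lemma wd_g0 (j : Fin 2) (z : Cn 2) :
    wderiv j g0 z =
      EC z * (((if j = 0 then A0 z else A1 z)) * (starRingEnd ℂ) (A0 z)
        + (if j = 0 then hC z * KC z else 0)) := by
  have h0 := hasF_coord 0 z
  have h1 := hasF_coord 1 z
  have c0 := hasF_conj 0 z
  have c1 := hasF_conj 1 z
  have H : HasFDerivAt g0 _ z :=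
    (((h0.mul c0).add (h1.mul c1)).cexp).mul
      ((((h0.mul h0).sub (h1.mul (h1.mul h1))).mul
        ((h0.mul ((c0.mul c0).sub (c1.mul (c1.mul c1)))).add (c0.const_mul 2))))
  rw [wderiv, H.fderiv]
  fin_cases j <;>
  · simp only [ContinuousLinearMap.add_apply, ContinuousLinearMap.sub_apply,
      ContinuousLinearMap.smul_apply, PR_apply, QR_apply, g0, A0, A1, EC, hC, KC, smul_eq_mul,
      if_true, Fin.isValue, Fin.mk_zero, Fin.mk_one, map_add, map_mul, map_sub, map_ofNat,
      Complex.conj_conj, map_neg]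
    norm_num
    ring_nf
    simp only [Complex.I_sq]
    ring

lemma wd_g1 (j : Fin 2) (z : Cn 2) :
    wderiv j g1 z =
      EC z * (((if j = 0 then A0 z else A1 z)) * (starRingEnd ℂ) (A1 z)
        + (if j = 1 then hC z * KC z else 0)) := by
  have h0 := hasF_coord 0 z
  have h1 := hasF_coord 1 z
  have c0 := hasF_conj 0 z
  have c1 := hasF_conj 1 z
  have H : HasFDerivAt g1 _ z :=
    (((h0.mul c0).add (h1.mul c1)).cexp).mul
      ((((h0.mul h0).sub (h1.mul (h1.mul h1))).mul
        ((h1.mul ((c0.mul c0).sub (c1.mul (c1.mul c1)))).add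
          (((c1.mul c1).const_mul 3).neg))))
  rw [wderiv, H.fderiv]
  fin_cases j <;>
  · simp only [ContinuousLinearMap.add_apply, ContinuousLinearMap.sub_apply,
      ContinuousLinearMap.neg_apply,
      ContinuousLinearMap.smul_apply, PR_apply, QR_apply, g1, A0, A1, EC, hC, KC, smul_eq_mul,
      if_true, Fin.isValue, Fin.mk_zero, Fin.mk_one, map_add, map_mul, map_sub, map_ofNat,
      Complex.conj_conj, map_neg]
    norm_num
    ring_nf
    simp only [Complex.I_sq]
    ring

lemma norm_sq_two (w : Cn 2) : ‖w‖ ^ 2 = ‖w 0‖ ^ 2 + ‖w 1‖ ^ 2 := by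
  rw [EuclideanSpace.norm_eq, Real.sq_sqrt (by positivity)]
  simp [Fin.sum_univ_two]

lemma cnorm_sq (w : ℂ) : (‖w‖ ^ 2 : ℝ) = Complex.normSq w := by
  rw [Complex.sq_norm]

lemma EC_eq (w : Cn 2) : EC w = ((Real.exp (‖w‖ ^ 2) : ℝ) : ℂ) := by
  rw [norm_sq_two, Complex.ofReal_exp, EC]
  congr 1
  push_cast [cnorm_sq]
  rw [Complex.mul_conj, Complex.mul_conj]

end S12

open S12 in
/-- For `q(s,t) := e^{|s|²+|t|²}·|s²-t³|²` on `ℂ²` one has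
`𝓛q(s,t)(X) ≥ |s²-t³|²·‖X‖²` for all `(s,t)` and `X`; in particular `q` is
plurisubharmonic on `ℂ²`. -/
theorem statement12 (q : Cn 2 → ℝ)
    (hq : q = fun z => Real.exp (‖z‖ ^ 2) * ‖(z 0) ^ 2 - (z 1) ^ 3‖ ^ 2) :
    (∀ (z X : Cn 2),
      ‖(z 0) ^ 2 - (z 1) ^ 3‖ ^ 2 * ‖X‖ ^ 2 ≤ (leviForm q z X).re) ∧
    (∀ (z X : Cn 2), 0 ≤ (leviForm q z X).re) := by
  have hfun : (fun w : Cn 2 => ((q w : ℝ) : ℂ)) = qC := by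
    funext w
    rw [hq]
    simp only [qC]
    rw [EC_eq, KC_eq]
    have hh : hC w = w 0 ^ 2 - w 1 ^ 3 := by rw [hC]; ring
    rw [hh, Complex.ofReal_mul, Complex.sq_norm, Complex.mul_conj]
  have key : ∀ (z X : Cn 2),
      ‖(z 0) ^ 2 - (z 1) ^ 3‖ ^ 2 * ‖X‖ ^ 2 ≤ (leviForm q z X).re := by
    intro z X
    have hL : leviForm q z X =
        EC z * ((A0 z * X 0 + A1 z * X 1) *
            ((starRingEnd ℂ) (A0 z * X 0 + A1 z * X 1)) +
          (hC z * (starRingEnd ℂ) (hC z)) *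
            (X 0 * (starRingEnd ℂ) (X 0) + X 1 * (starRingEnd ℂ) (X 1))) := by
      rw [leviForm, leviFormC, hfun]
      simp only [wbar_qC0, wbar_qC1, Fin.sum_univ_two, wd_g0, wd_g1]
      rw [← KC_eq]
      norm_num
      ring
    set S : ℂ := A0 z * X 0 + A1 z * X 1 with hS
    rw [hL, EC_eq, Complex.mul_conj, Complex.mul_conj, Complex.mul_conj, Complex.mul_conj]
    have hre : ((((Real.exp (‖z‖ ^ 2) : ℝ)) : ℂ) *
        (((Complex.normSq S : ℝ) : ℂ) + ((Complex.normSq (hC z) : ℝ) : ℂ) *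
          (((Complex.normSq (X 0) : ℝ) : ℂ) + ((Complex.normSq (X 1) : ℝ) : ℂ)))).re =
        Real.exp (‖z‖ ^ 2) * (Complex.normSq S + Complex.normSq (hC z) *
          (Complex.normSq (X 0) + Complex.normSq (X 1))) := by
      have : ((((Real.exp (‖z‖ ^ 2) : ℝ)) : ℂ) *
          (((Complex.normSq S : ℝ) : ℂ) + ((Complex.normSq (hC z) : ℝ) : ℂ) *
            (((Complex.normSq (X 0) : ℝ) : ℂ) + ((Complex.normSq (X 1) : ℝ) : ℂ)))) =
          ((Real.exp (‖z‖ ^ 2) * (Complex.normSq S + Complex.normSq (hC z) *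
            (Complex.normSq (X 0) + Complex.normSq (X 1))) : ℝ) : ℂ) := by
        push_cast; ring
      rw [this, Complex.ofReal_re]
    rw [hre]
    have habs : ‖(z 0) ^ 2 - (z 1) ^ 3‖ ^ 2 = Complex.normSq (hC z) := by
      rw [Complex.sq_norm]
      congr 1
      rw [hC]; ring
    have hX : ‖X‖ ^ 2 = Complex.normSq (X 0) + Complex.normSq (X 1) := by
      rw [norm_sq_two, cnorm_sq, cnorm_sq]
    rw [habs, hX]
    have he : 1 ≤ Real.exp (‖z‖ ^ 2) := Real.one_le_exp (by positivity)
    have h1 : 0 ≤ Complex.normSq S := Complex.normSq_nonneg _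
    have h2 : 0 ≤ Complex.normSq (hC z) := Complex.normSq_nonneg _
    have h3 : 0 ≤ Complex.normSq (X 0) := Complex.normSq_nonneg _
    have h4 : 0 ≤ Complex.normSq (X 1) := Complex.normSq_nonneg _
    nlinarith [mul_nonneg (le_trans zero_le_one he) h1,
      mul_le_mul_of_nonneg_right he (mul_nonneg h2 (add_nonneg h3 h4))]
  refine ⟨key, fun z X => le_trans ?_ (key z X)⟩
  positivity
end
end

section
/- Let m and l be positive integers with m/2 ≤ l < m, and define p : ℂ → ℝ by p(z) := 2m²·z^{m+l}·z̄^{m−l} + 4(m²−l²)·|z|^{2m} + 2m²·z^{m−l}·z̄^{m+l}, so that p(re^{iθ}) = r^{2m}·(4m²·cos(2lθ) + 4(m²−l²)). Then p is real-valued and subharmonic on ℂ, and there exists z ∈ ℂ with p(z) < 0. -/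
noncomputable section

open Complex Metric Set Filter

def Fm (a b : ℕ) : ℂ → ℂ := fun w => w ^ a * ((starRingEnd ℂ) w) ^ b

def Mc (u v : ℂ) : ℂ →L[ℝ] ℂ :=
  u • ContinuousLinearMap.id ℝ ℂ + v • (Complex.conjCLE.toContinuousLinearMap)

@[simp] lemma Mc_apply (u v w : ℂ) : Mc u v w = u * w + v * (starRingEnd ℂ) w := by
  simp [Mc, Complex.conjCLE, smul_eq_mul]

lemma hasFDerivAt_Fm (a b : ℕ) (z : ℂ) :
    HasFDerivAt (Fm a b)
      (Mc ((a:ℂ) * z ^ (a-1) * ((starRingEnd ℂ) z) ^ b)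
          ((b:ℂ) * z ^ a * ((starRingEnd ℂ) z) ^ (b-1))) z := by
  have hc : HasFDerivAt (fun w : ℂ => (starRingEnd ℂ) w)
      (Complex.conjCLE.toContinuousLinearMap) z :=
    Complex.conjCLE.toContinuousLinearMap.hasFDerivAt
  have h1 : HasFDerivAt (fun w : ℂ => w ^ a)
      (((a:ℂ) * z ^ (a-1)) • ContinuousLinearMap.id ℝ ℂ) z := by
    have h := (hasDerivAt_pow a z).hasFDerivAt.restrictScalars ℝ
    refine h.congr_fderiv ?_
    ext w
    simp [smul_eq_mul]
    ring
  have h2 : HasFDerivAt (fun w : ℂ => ((starRingEnd ℂ) w) ^ b)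
      (((b:ℂ) * ((starRingEnd ℂ) z) ^ (b-1)) • Complex.conjCLE.toContinuousLinearMap) z := by
    have hb := ((hasDerivAt_pow b ((starRingEnd ℂ) z)).hasFDerivAt.restrictScalars ℝ).comp z hc
    refine hb.congr_fderiv ?_
    ext w
    simp [smul_eq_mul]
    ring
  have h := h1.mul h2
  refine h.congr_fderiv ?_
  ext w
  simp [Mc, Fm, smul_eq_mul]
  ring

lemma hasFDerivAt_comb (c1 c2 c3 : ℂ) (a1 b1 a2 b2 a3 b3 : ℕ) (z : ℂ) :
    HasFDerivAt (fun w => c1 * Fm a1 b1 w + c2 * Fm a2 b2 w + c3 * Fm a3 b3 w)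
      (Mc (c1 * a1 * Fm (a1-1) b1 z + c2 * a2 * Fm (a2-1) b2 z + c3 * a3 * Fm (a3-1) b3 z)
          (c1 * b1 * Fm a1 (b1-1) z + c2 * b2 * Fm a2 (b2-1) z + c3 * b3 * Fm a3 (b3-1) z)) z := by
  have h := (((hasFDerivAt_Fm a1 b1 z).const_mul c1).add
    ((hasFDerivAt_Fm a2 b2 z).const_mul c2)).add ((hasFDerivAt_Fm a3 b3 z).const_mul c3)
  refine h.congr_fderiv ?_
  ext w
  simp [Mc, Fm, smul_eq_mul]
  ring

lemma lap_comb (c1 c2 c3 : ℂ) (a1 b1 a2 b2 a3 b3 : ℕ)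
    (q : ℂ → ℂ) (hq : q = fun w => c1 * Fm a1 b1 w + c2 * Fm a2 b2 w + c3 * Fm a3 b3 w) (z : ℂ) :
    iteratedFDeriv ℝ 2 q z ![1,1] + iteratedFDeriv ℝ 2 q z ![Complex.I, Complex.I] =
      4 * (c1 * a1 * b1 * Fm (a1-1) (b1-1) z + c2 * a2 * b2 * Fm (a2-1) (b2-1) z
        + c3 * a3 * b3 * Fm (a3-1) (b3-1) z) := by
  subst hq
  have hfd : (fderiv ℝ (fun w => c1 * Fm a1 b1 w + c2 * Fm a2 b2 w + c3 * Fm a3 b3 w)) =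
      fun w => Mc ((c1 * a1) * Fm (a1-1) b1 w + (c2 * a2) * Fm (a2-1) b2 w + (c3 * a3) * Fm (a3-1) b3 w)
        ((c1 * b1) * Fm a1 (b1-1) w + (c2 * b2) * Fm a2 (b2-1) w + (c3 * b3) * Fm a3 (b3-1) w) :=
    funext fun w => (hasFDerivAt_comb c1 c2 c3 a1 b1 a2 b2 a3 b3 w).fderiv
  have hG := hasFDerivAt_comb (c1 * a1) (c2 * a2) (c3 * a3) (a1-1) b1 (a2-1) b2 (a3-1) b3 z
  have hH := hasFDerivAt_comb (c1 * b1) (c2 * b2) (c3 * b3) a1 (b1-1) a2 (b2-1) a3 (b3-1) z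
  have h2 : HasFDerivAt (fun w => Mc ((c1 * a1) * Fm (a1-1) b1 w + (c2 * a2) * Fm (a2-1) b2 w + (c3 * a3) * Fm (a3-1) b3 w)
        ((c1 * b1) * Fm a1 (b1-1) w + (c2 * b2) * Fm a2 (b2-1) w + (c3 * b3) * Fm a3 (b3-1) w))
      ((Mc ((c1*a1) * (a1-1 : ℕ) * Fm (a1-1-1) b1 z + (c2*a2) * (a2-1 : ℕ) * Fm (a2-1-1) b2 z + (c3*a3) * (a3-1 : ℕ) * Fm (a3-1-1) b3 z)
          ((c1*a1) * b1 * Fm (a1-1) (b1-1) z + (c2*a2) * b2 * Fm (a2-1) (b2-1) z + (c3*a3) * b3 * Fm (a3-1) (b3-1) z)).smulRight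
        (ContinuousLinearMap.id ℝ ℂ) +
       (Mc ((c1*b1) * a1 * Fm (a1-1) (b1-1) z + (c2*b2) * a2 * Fm (a2-1) (b2-1) z + (c3*b3) * a3 * Fm (a3-1) (b3-1) z)
          ((c1*b1) * (b1-1 : ℕ) * Fm a1 (b1-1-1) z + (c2*b2) * (b2-1 : ℕ) * Fm a2 (b2-1-1) z + (c3*b3) * (b3-1 : ℕ) * Fm a3 (b3-1-1) z)).smulRight
        (Complex.conjCLE.toContinuousLinearMap)) z := by
    simp only [Mc]
    exact (hG.smul_const (ContinuousLinearMap.id ℝ ℂ)).add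
      (hH.smul_const (Complex.conjCLE.toContinuousLinearMap))
  rw [iteratedFDeriv_two_apply, iteratedFDeriv_two_apply, hfd, h2.fderiv]
  simp [smul_eq_mul, Complex.conjCLE]
  ring_nf
  simp [Complex.I_sq]
  ring

/-- Remark 5.  For positive integers `m, l` with `m/2 ≤ l < m`, the
function `p(z) = 2m² z^{m+l} z̄^{m-l} + 4(m²-l²)|z|^{2m} + 2m² z^{m-l} z̄^{m+l}` is
real-valued and subharmonic on `ℂ` (its Laplacian, in the underlying real coordinates of
`ℂ ≅ ℝ²`, is nonnegative), and attains a negative value somewhere. -/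
theorem statement13 (m l : ℕ) (hm : 0 < m) (hl : 0 < l)
    (hml1 : m ≤ 2 * l) (hml2 : l < m)
    (p : ℂ → ℂ)
    (hp : p = fun z => 2 * (m : ℂ) ^ 2 * z ^ (m + l) * ((starRingEnd ℂ) z) ^ (m - l)
      + 4 * ((m : ℂ) ^ 2 - (l : ℂ) ^ 2) * ((‖z‖ : ℝ) : ℂ) ^ (2 * m)
      + 2 * (m : ℂ) ^ 2 * z ^ (m - l) * ((starRingEnd ℂ) z) ^ (m + l)) :
    (∀ z : ℂ, (p z).im = 0) ∧
    (∀ z : ℂ, 0 ≤ iteratedFDeriv ℝ 2 (fun w => (p w).re) z ![1, 1] +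
      iteratedFDeriv ℝ 2 (fun w => (p w).re) z ![Complex.I, Complex.I]) ∧
    (∃ z : ℂ, (p z).re < 0) := by
  have hpf : p = fun w => (2 * (m : ℂ) ^ 2) * Fm (m+l) (m-l) w
      + (4 * ((m : ℂ) ^ 2 - (l : ℂ) ^ 2)) * Fm m m w
      + (2 * (m : ℂ) ^ 2) * Fm (m-l) (m+l) w := by
    subst hp; funext w
    have habs : ((‖w‖ : ℝ) : ℂ) ^ (2*m) = Fm m m w := by
      simp only [Fm]
      rw [← mul_pow, Complex.mul_conj, Complex.normSq_eq_norm_sq]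
      norm_cast
      rw [← pow_mul]
    rw [← habs]
    simp only [Fm]
    ring
  refine ⟨?_, ?_, ?_⟩
  · -- real-valued
    intro z
    rw [← Complex.conj_eq_iff_im, hpf]
    simp only [Fm, map_add, map_mul, map_pow, Complex.conj_conj, map_ofNat,
      Complex.conj_natCast, map_sub]
    ring
  · -- subharmonic
    intro z
    have hc : ContDiff ℝ 2 (fun w : ℂ => (starRingEnd ℂ) w) :=
      Complex.conjCLE.toContinuousLinearMap.contDiff
    have hF : ∀ a b : ℕ, ContDiff ℝ 2 (Fm a b) := fun a b =>
      (contDiff_id.pow a).mul (hc.pow b)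
    have hcd : ContDiff ℝ 2 p := by
      rw [hpf]
      exact ((contDiff_const.mul (hF _ _)).add (contDiff_const.mul (hF _ _))).add
        (contDiff_const.mul (hF _ _))
    have hre : (fun w => (p w).re) = (Complex.reCLM ∘ p) := rfl
    rw [hre, Complex.reCLM.iteratedFDeriv_comp_left hcd.contDiffAt le_rfl]
    simp only [ContinuousLinearMap.compContinuousMultilinearMap_coe, Function.comp_apply,
      Complex.reCLM_apply]
    rw [← Complex.add_re, lap_comb _ _ _ (m+l) (m-l) m m (m-l) (m+l) p hpf z]
    -- now pure computation
    set r := ‖z‖ with hr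
    set w := Fm (m+l-1) (m-l-1) z with hwdef
    have hconj : Fm (m-l-1) (m+l-1) z = (starRingEnd ℂ) w := by
      rw [hwdef]; simp only [Fm, map_mul, map_pow, Complex.conj_conj]; ring
    have hmid : Fm (m-1) (m-1) z = ((r^(2*(m-1)) : ℝ) : ℂ) := by
      simp only [Fm]
      rw [← mul_pow, Complex.mul_conj, Complex.normSq_eq_norm_sq]
      norm_cast
      rw [← pow_mul, ← hr]
    have habsw : ‖w‖ = r^(2*(m-1)) := by
      rw [hwdef]; simp only [Fm, norm_mul, norm_pow, Complex.norm_conj]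
      rw [← pow_add, ← hr]; congr 1; omega
    have hA : (2 * (m:ℂ)^2) * ((m+l : ℕ):ℂ) * ((m-l : ℕ):ℂ)
        = ((2*(m:ℝ)^2*((m:ℝ)^2-(l:ℝ)^2) : ℝ) : ℂ) := by
      push_cast [Nat.cast_sub hml2.le]; ring
    have hA' : (2 * (m:ℂ)^2) * ((m-l : ℕ):ℂ) * ((m+l : ℕ):ℂ)
        = ((2*(m:ℝ)^2*((m:ℝ)^2-(l:ℝ)^2) : ℝ) : ℂ) := by
      push_cast [Nat.cast_sub hml2.le]; ring
    have hB : (4 * ((m:ℂ)^2 - (l:ℂ)^2)) * ((m : ℕ):ℂ) * ((m : ℕ):ℂ)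
        = ((2*(2*(m:ℝ)^2*((m:ℝ)^2-(l:ℝ)^2)) : ℝ) : ℂ) := by
      push_cast; ring
    rw [hconj, hmid, hA, hA', hB]
    set Kr : ℝ := 2*(m:ℝ)^2*((m:ℝ)^2-(l:ℝ)^2) with hKr
    have hEre : (4 * (((Kr:ℝ):ℂ) * w + ((2*Kr : ℝ):ℂ) * ((r^(2*(m-1)) : ℝ):ℂ)
        + ((Kr:ℝ):ℂ) * (starRingEnd ℂ) w)) = ((4*(Kr*(2*w.re) + 2*Kr*(r^(2*(m-1)))) : ℝ) : ℂ) := by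
      rw [show (((Kr:ℝ):ℂ) * w + ((2*Kr : ℝ):ℂ) * ((r^(2*(m-1)) : ℝ):ℂ)
          + ((Kr:ℝ):ℂ) * (starRingEnd ℂ) w)
        = ((Kr:ℝ):ℂ) * (w + (starRingEnd ℂ) w) + ((2*Kr : ℝ):ℂ) * ((r^(2*(m-1)) : ℝ):ℂ) from by
          ring, Complex.add_conj]
      push_cast; ring
    rw [hEre, Complex.ofReal_re]
    have hlm : (l:ℝ) ≤ (m:ℝ) := by exact_mod_cast hml2.le
    have hl0 : (0:ℝ) ≤ (l:ℝ) := by positivity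
    have hsq : (l:ℝ)^2 ≤ (m:ℝ)^2 := by nlinarith
    have hKnn : 0 ≤ Kr := by
      rw [hKr]
      nlinarith [mul_nonneg (sq_nonneg (m:ℝ)) (show (0:ℝ) ≤ (m:ℝ)^2 - (l:ℝ)^2 by linarith)]
    have hwre : -(r^(2*(m-1))) ≤ w.re := by
      have h1 := Complex.abs_re_le_norm w
      have h2 := neg_abs_le w.re
      rw [habsw] at h1
      have := (abs_le.mp h1).1
      linarith
    nlinarith [mul_nonneg hKnn (by linarith : (0:ℝ) ≤ w.re + r^(2*(m-1)))]
  · -- negative value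
    have hlR : (0:ℝ) < (l:ℝ) := by exact_mod_cast hl
    refine ⟨Complex.exp (((Real.pi / (2*(l:ℝ)) : ℝ) : ℂ) * Complex.I), ?_⟩
    set θ : ℝ := Real.pi / (2*(l:ℝ)) with hθdef
    set z := Complex.exp ((θ:ℂ) * Complex.I) with hz
    have hzne : z ≠ 0 := Complex.exp_ne_zero _
    have habs1 : ‖z‖ = 1 := Complex.norm_exp_ofReal_mul_I θ
    have hconjz : (starRingEnd ℂ) z = z⁻¹ := by
      rw [hz, ← Complex.exp_conj, ← Complex.exp_neg]
      congr 1
      simp [Complex.conj_ofReal]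
    have hθ : (2*(l:ℝ)) * θ = Real.pi := by
      rw [hθdef]; field_simp
    have hz2l : z ^ (2*l) = -1 := by
      rw [hz, ← Complex.exp_nat_mul]
      rw [show ((2*l : ℕ) : ℂ) * ((θ:ℂ) * Complex.I) = (Real.pi : ℂ) * Complex.I from by
        rw [show ((2*l : ℕ) : ℂ) * ((θ:ℂ) * Complex.I) = (((2*(l:ℝ))*θ : ℝ) : ℂ) * Complex.I from by
          push_cast; ring, hθ]]
      exact Complex.exp_pi_mul_I
    have ht1 : z^(m+l) * ((starRingEnd ℂ) z)^(m-l) = -1 := by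
      rw [hconjz, inv_pow, ← pow_sub₀ z hzne (by omega : m - l ≤ m + l),
        show m + l - (m - l) = 2*l from by omega]
      exact hz2l
    have ht2 : z^(m-l) * ((starRingEnd ℂ) z)^(m+l) = -1 := by
      rw [hconjz, inv_pow]
      rw [show z^(m-l) * (z^(m+l))⁻¹ = (z^(m+l) * (z^(m-l))⁻¹)⁻¹ from by
        rw [mul_inv, inv_inv]; ring]
      rw [← pow_sub₀ z hzne (by omega : m - l ≤ m + l),
        show m + l - (m - l) = 2*l from by omega, hz2l]
      norm_num
    have hmidv : ((‖z‖ : ℝ):ℂ)^(2*m) = 1 := by rw [habs1]; simp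
    have hpz : p z = -4*(l:ℂ)^2 := by
      rw [hp]
      simp only
      calc 2*(m:ℂ)^2 * z^(m+l) * ((starRingEnd ℂ) z)^(m-l)
            + 4*((m:ℂ)^2-(l:ℂ)^2)*((‖z‖:ℝ):ℂ)^(2*m)
            + 2*(m:ℂ)^2 * z^(m-l) * ((starRingEnd ℂ) z)^(m+l)
          = 2*(m:ℂ)^2 * (z^(m+l) * ((starRingEnd ℂ) z)^(m-l))
            + 4*((m:ℂ)^2-(l:ℂ)^2)*((‖z‖:ℝ):ℂ)^(2*m)
            + 2*(m:ℂ)^2 * (z^(m-l) * ((starRingEnd ℂ) z)^(m+l)) := by ring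
        _ = 2*(m:ℂ)^2 * (-1) + 4*((m:ℂ)^2-(l:ℂ)^2)*1 + 2*(m:ℂ)^2*(-1) := by
            rw [ht1, ht2, hmidv]
        _ = -4*(l:ℂ)^2 := by ring
    rw [hpz, show (-4*(l:ℂ)^2 : ℂ) = ((-4*(l:ℝ)^2 : ℝ) : ℂ) from by push_cast; ring,
      Complex.ofReal_re]
    nlinarith
end
end
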